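/- Let S be a set of substitutions on a finite alphabet A. If for every sequence s in S^ω the set StabLet(s) of letters indefinitely desubstitutable along s is empty, then the stable set of S is exactly the set of S-adic words. -/

import Mathlib

universe u
variable {A : Type u}

/-- Apply a substitution (given by images of letters) to a finite word. -/
def applyList (f : A → List A) (u : List A) : List A := u.flatMap f

/-- Starting position of the image of the `n`-th letter of `v` inside `f(v)`. -/
def blockStart (f : A → List A) (v : ℕ → A) : ℕ → ℕ
  | 0 => 0
  | n + 1 => blockStart f v n + (f (v n)).length

/-- `ApplyEq f v u` means `u = f(v)` for right-infinite words. -/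
def ApplyEq (f : A → List A) (v u : ℕ → A) : Prop :=
  ∀ (n i : ℕ) (h : i < (f (v n)).length),
    u (blockStart f v n + i) = (f (v n))[i]

/-- `u` occurs as a factor of `w` at position `k`. -/
def FactorAt (w : ℕ → A) (u : List A) (k : ℕ) : Prop :=
  ∀ (i : ℕ) (h : i < u.length), u[i] = w (k + i)

def Factor (w : ℕ → A) (u : List A) : Prop := ∃ k, FactorAt w u k

/-- `u` is a prefix of the infinite word `w`. -/
def PrefixOf (u : List A) (w : ℕ → A) : Prop :=
  ∀ (i : ℕ) (h : i < u.length), u[i] = w i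

/-- Membership in the stable set of a set `S` of substitutions. -/
def InStable (S : Set (A → List A)) (w : ℕ → A) : Prop :=
  ∃ (σ : ℕ → A → List A) (ws : ℕ → ℕ → A),
    (∀ n, σ n ∈ S) ∧ ws 0 = w ∧ ∀ n, ApplyEq (σ n) (ws (n + 1)) (ws n)

/-- Composition `σ_1 ∘ ⋯ ∘ σ_n` of the first `n` substitutions of `s` (0-indexed). -/
def compSeq (s : ℕ → A → List A) : ℕ → A → List A
  | 0 => fun a => [a]
  | n + 1 => fun a => applyList (compSeq s n) (s n a)

/-- `w` is S-adic with directive sequence `σ`. -/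
def SAdicWith (σ : ℕ → A → List A) (w : ℕ → A) : Prop :=
  ∃ a : ℕ → A, (∀ n, PrefixOf (compSeq σ n (a n)) w) ∧
    ∀ N : ℕ, ∃ n, N ≤ (compSeq σ n (a n)).length


/-- Finite nonempty words indefinitely desubstitutable with directive sequence `s`. -/
def StabFin (s : ℕ → A → List A) : Set (List A) :=
  {u | ∃ us : ℕ → List A, us 0 = u ∧ (∀ n, us n ≠ []) ∧
    ∀ n, us n = applyList (s n) (us (n + 1))}

/-- Nonempty concatenations of elements of `X`. -/
def WPlus (X : Set (List A)) : Set (List A) :=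
  {u | ∃ L : List (List A), L ≠ [] ∧ (∀ x ∈ L, x ∈ X) ∧ u = L.flatten}

/-- Elements of `StabFin s` that are not concatenations of two or more
elements of `StabFin s`. -/
def GenStabFin (s : ℕ → A → List A) : Set (List A) :=
  StabFin s \ {u | ∃ x y, x ∈ StabFin s ∧ y ∈ WPlus (StabFin s) ∧ u = x ++ y}

/-- Letters indefinitely desubstitutable along `s`. -/
def StabLet (s : ℕ → A → List A) : Set A :=
  {α | ∃ as : ℕ → A, as 0 = α ∧ ∀ n, s n (as (n + 1)) = [as n]}

/-- Words of the form `σ_1⋯σ_k(α)` with `α` indefinitely desubstitutable along the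
remaining suffix of `s`. -/
def StabUltLet (s : ℕ → A → List A) : Set (List A) :=
  {u | ∃ (k : ℕ) (α : A), α ∈ StabLet (fun n => s (n + k)) ∧ u = compSeq s k α}


lemma applyList_append (f : A → List A) (L M : List A) :
    applyList f (L ++ M) = applyList f L ++ applyList f M :=
  List.flatMap_append

lemma compSeq_succ_front (s : ℕ → A → List A) (n : ℕ) (a : A) :
    compSeq s (n+1) a = applyList (s 0) (compSeq (fun m => s (m+1)) n a) := by
  induction n generalizing a with
  | zero => simp [compSeq, applyList]
  | succ n ih =>
    show applyList (compSeq s (n+1)) (s (n+1) a) = _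
    have : applyList (compSeq s (n+1)) (s (n+1) a)
        = applyList (s 0) (applyList (compSeq (fun m => s (m+1)) n) (s (n+1) a)) := by
      simp only [applyList, List.flatMap_assoc]
      congr 1
      funext b
      exact ih b
    rw [this]
    rfl

lemma compSeq_ne_nil {s : ℕ → A → List A} (h : ∀ n a, s n a ≠ []) :
    ∀ n a, compSeq s n a ≠ [] := by
  intro n
  induction n with
  | zero => intro a; simp [compSeq]
  | succ n ih =>
    intro a
    show applyList (compSeq s n) (s n a) ≠ []
    obtain ⟨b, t, hbt⟩ := List.exists_cons_of_ne_nil (h n a)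
    rw [hbt]
    show compSeq s n b ++ applyList (compSeq s n) t ≠ []
    simp [ih b]

lemma blockStart_congr {f : A → List A} {v v' : ℕ → A} {n : ℕ}
    (h : ∀ m, m < n → v m = v' m) : blockStart f v n = blockStart f v' n := by
  induction n with
  | zero => rfl
  | succ n ih =>
    show blockStart f v n + _ = blockStart f v' n + _
    rw [ih (fun m hm => h m (Nat.lt_succ_of_lt hm)), h n (Nat.lt_succ_self n)]

lemma blockStart_eq_length (f : A → List A) (v : ℕ → A) (n : ℕ) :
    blockStart f v n = (applyList f ((List.range n).map v)).length := by
  induction n with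
  | zero => rfl
  | succ n ih =>
    rw [List.range_succ, List.map_append, applyList_append, List.length_append]
    show blockStart f v n + (f (v n)).length = _
    rw [ih]
    simp [applyList]

lemma applyEq_prefix {f : A → List A} {v u : ℕ → A} (hA : ApplyEq f v u) (n : ℕ) :
    PrefixOf (applyList f ((List.range n).map v)) u := by
  induction n with
  | zero => intro i h; simp [applyList] at h
  | succ n ih =>
    intro i h
    simp only [List.range_succ, List.map_append, applyList_append] at h ⊢
    rcases Nat.lt_or_ge i (applyList f ((List.range n).map v)).length with hi | hi
    · rw [List.getElem_append_left hi]
      exact ih i hi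
    · rw [List.getElem_append_right hi]
      have hlen : (applyList f ((List.range n).map v)).length = blockStart f v n :=
        (blockStart_eq_length f v n).symm
      have hsing : applyList f ((List.map v [n])) = f (v n) := by simp [applyList]
      have hlt : i - (applyList f ((List.range n).map v)).length < (f (v n)).length := by
        rw [List.length_append, hsing] at h
        omega
      have key := hA n (i - (applyList f ((List.range n).map v)).length) hlt
      rw [List.getElem_of_eq hsing (by rw [hsing] at *; omega), ← key]
      congr 1
      omega

lemma prefixOf_rangeMap {L : List A} {v : ℕ → A} (h : PrefixOf L v) :
    L = (List.range L.length).map v := by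
  apply List.ext_getElem
  · simp
  · intro n h1 h2
    simp only [List.getElem_map, List.getElem_range]
    exact h n h1

lemma applyEq_prefixOf {f : A → List A} {v u : ℕ → A} {L : List A}
    (hA : ApplyEq f v u) (hL : PrefixOf L v) : PrefixOf (applyList f L) u := by
  rw [prefixOf_rangeMap hL]
  exact applyEq_prefix hA L.length

lemma applyList_isPrefix {f : A → List A} {P L : List A} (h : P <+: L) :
    applyList f P <+: applyList f L := by
  obtain ⟨R, rfl⟩ := h
  rw [applyList_append]
  exact List.prefix_append _ _

lemma range_isPrefix {n m : ℕ} (h : n ≤ m) : List.range n <+: List.range m :=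
  List.prefix_iff_eq_take.mpr (by rw [List.take_range]; simp [Nat.min_eq_left h])

lemma getElem_applyList_block (f : A → List A) (v : ℕ → A) (L : List A)
    (n : ℕ) (hn : n < L.length)
    (hv : ∀ m (h : m < L.length), m ≤ n → L[m] = v m)
    (i : ℕ) (hi : i < (f (v n)).length) :
    ∃ h : blockStart f v n + i < (applyList f L).length,
      (applyList f L)[blockStart f v n + i] = (f (v n))[i] := by
  set P := (List.range (n+1)).map v with hP
  have hPtake : P = L.take (n+1) := by
    apply List.ext_getElem
    · simp [hP]; omega
    · intro m h1 h2
      have hm : m ≤ n := by simp [hP] at h1; omega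
      have hmL : m < L.length := by omega
      simp only [hP, List.getElem_map, List.getElem_range, List.getElem_take]
      exact (hv m hmL hm).symm
  have hPL : P <+: L := hPtake ▸ List.take_prefix (n+1) L
  have hPre : applyList f P <+: applyList f L := applyList_isPrefix hPL
  have hsplit : applyList f P = applyList f ((List.range n).map v) ++ applyList f (List.map v [n]) := by
    rw [hP, List.range_succ, List.map_append, applyList_append]
  have hsing : applyList f (List.map v [n]) = f (v n) := by simp [applyList]
  have hlen0 : (applyList f ((List.range n).map v)).length = blockStart f v n :=
    (blockStart_eq_length f v n).symm
  have hlenP : (applyList f P).length = blockStart f v n + (f (v n)).length := by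
    rw [hsplit, List.length_append, hlen0, hsing]
  have hltP : blockStart f v n + i < (applyList f P).length := by omega
  have hlt : blockStart f v n + i < (applyList f L).length :=
    lt_of_lt_of_le hltP hPre.length_le
  refine ⟨hlt, ?_⟩
  rw [← hPre.getElem hltP]
  rw [List.getElem_of_eq hsplit hltP]
  rw [List.getElem_append_right (by omega)]
  rw [List.getElem_of_eq hsing (by rw [hsing] at *; omega)]
  congr 1
  omega

lemma length_applyList_le [Fintype A] (f : A → List A) (L : List A) :
    (applyList f L).length ≤ L.length * (Finset.univ.sup (fun a => (f a).length) + 1) := by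
  rw [applyList, List.length_flatMap]
  calc (List.map (List.length ∘ f) L).sum
      ≤ (List.map (List.length ∘ f) L).length • (Finset.univ.sup (fun a => (f a).length) + 1) := by
        apply List.sum_le_card_nsmul
        intro x hx
        obtain ⟨a, _, rfl⟩ := List.mem_map.mp hx
        exact le_trans (Finset.le_sup (Finset.mem_univ a)) (Nat.le_succ _)
    _ = L.length * (Finset.univ.sup (fun a => (f a).length) + 1) := by
        simp [smul_eq_mul]

lemma length_applyList_ge {f : A → List A} {L : List A}
    (h : ∀ a ∈ L, (f a).length ≥ 1) : L.length ≤ (applyList f L).length := by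
  rw [applyList, List.length_flatMap]
  induction L with
  | nil => simp
  | cons b t ih =>
    simp only [List.map_cons, List.sum_cons, List.length_cons]
    have h1 := h b List.mem_cons_self
    have h2 := ih (fun a ha => h a (List.mem_cons_of_mem b ha))
    omega

lemma eventually_const_of_bdd {g : ℕ → ℕ} (hm : ∀ n, g n ≤ g (n+1)) (B : ℕ)
    (hb : ∀ n, g n < B) : ∃ n0, ∀ m, n0 ≤ m → g m = g n0 := by
  have hmono : Monotone g := monotone_nat_of_le_succ hm
  have hne : (Set.range g).Nonempty := ⟨g 0, 0, rfl⟩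
  have hbdd : BddAbove (Set.range g) := ⟨B, fun x ⟨n, hn⟩ => hn ▸ (hb n).le⟩
  obtain ⟨n0, hn0⟩ := Nat.sSup_mem hne hbdd
  refine ⟨n0, fun m hm' => ?_⟩
  have h1 : g m ≤ g n0 := hn0 ▸ le_csSup hbdd ⟨m, rfl⟩
  exact le_antisymm h1 (hmono hm')

lemma compSeq_prefix_tower {σ : ℕ → A → List A} {ws : ℕ → ℕ → A}
    (hAE : ∀ n, ApplyEq (σ n) (ws (n + 1)) (ws n)) :
    ∀ n m, PrefixOf (compSeq (fun x => σ (x + m)) n (ws (n + m) 0)) (ws m) := by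
  intro n
  induction n with
  | zero =>
    intro m i hi
    have h1 : i = 0 := by
      have : (compSeq (fun x => σ (x + m)) 0 (ws (0 + m) 0)).length = 1 := rfl
      omega
    subst h1
    show ws (0 + m) 0 = ws m 0
    rw [Nat.zero_add]
  | succ n ih =>
    intro m
    have hshift : (fun x => (fun y => σ (y + m)) (x + 1)) = (fun x => σ (x + (m + 1))) := by
      funext x
      show σ (x + 1 + m) = σ (x + (m + 1))
      rw [show x + 1 + m = x + (m + 1) by omega]
    have hidx : n + 1 + m = n + (m + 1) := by omega
    have hrw : compSeq (fun x => σ (x + m)) (n + 1) (ws (n + 1 + m) 0)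
        = applyList (σ m) (compSeq (fun x => σ (x + (m + 1))) n (ws (n + (m + 1)) 0)) := by
      rw [hidx, compSeq_succ_front, hshift]
      simp only [Nat.zero_add]
    rw [hrw]
    exact applyEq_prefixOf (hAE m) (ih (m + 1))

lemma forward_dir [Fintype A] (S : Set (A → List A))
    (hS : ∀ f ∈ S, ∀ a, f a ≠ [])
    (hlet : ∀ σ : ℕ → A → List A, (∀ n, σ n ∈ S) → StabLet σ = ∅)
    (w : ℕ → A) (h : InStable S w) : ∃ σ, (∀ n, σ n ∈ S) ∧ SAdicWith σ w := by
  obtain ⟨σ, ws, hmem, hw0, hAE⟩ := h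
  set a : ℕ → A := fun n => ws n 0 with ha
  have hne : ∀ n α, σ n α ≠ [] := fun n α => hS (σ n) (hmem n) α
  have hcs_ne : ∀ n α, compSeq σ n α ≠ [] := compSeq_ne_nil hne
  have hcs_pos : ∀ n α, 1 ≤ (compSeq σ n α).length := by
    intro n α
    have := hcs_ne n α
    cases hc : compSeq σ n α with
    | nil => exact absurd hc this
    | cons b t => simp [hc]
  have hhead : ∀ n, ∃ t, σ n (a (n + 1)) = a n :: t := by
    intro n
    obtain ⟨b, t, hbt⟩ := List.exists_cons_of_ne_nil (hne n (a (n + 1)))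
    have hlt : (0 : ℕ) < (σ n (ws (n + 1) 0)).length := by
      rw [show ws (n+1) 0 = a (n+1) from rfl, hbt]; simp
    have key := hAE n 0 0 hlt
    have hbs : blockStart (σ n) (ws (n + 1)) 0 = 0 := rfl
    rw [hbs] at key
    refine ⟨t, ?_⟩
    rw [hbt]
    congr 1
    have : (σ n (ws (n+1) 0))[0]'hlt = b := by
      simp only [show ws (n+1) 0 = a (n+1) from rfl]
      rw [List.getElem_of_eq hbt]
      simp
    rw [ha]
    simp only []
    rw [key, this]
  set len : ℕ → ℕ := fun n => (compSeq σ n (a n)).length with hlen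
  have hstep : ∀ n, len n ≤ len (n + 1) ∧ (len (n + 1) = len n → σ n (a (n + 1)) = [a n]) := by
    intro n
    obtain ⟨t, ht⟩ := hhead n
    have hsplit : compSeq σ (n + 1) (a (n + 1))
        = compSeq σ n (a n) ++ applyList (compSeq σ n) t := by
      show applyList (compSeq σ n) (σ n (a (n + 1))) = _
      rw [ht]
      show compSeq σ n (a n) ++ applyList (compSeq σ n) t = _
      rfl
    have hlen1 : len (n + 1) = len n + (applyList (compSeq σ n) t).length := by
      rw [hlen]; simp only []; rw [hsplit, List.length_append]
    constructor
    · omega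
    · intro heq
      have h0 : (applyList (compSeq σ n) t).length = 0 := by omega
      cases t with
      | nil => rw [ht]
      | cons b t' =>
        exfalso
        have : compSeq σ n b ++ applyList (compSeq σ n) t' = applyList (compSeq σ n) (b :: t') := rfl
        have hge := hcs_pos n b
        rw [← this, List.length_append] at h0
        omega
  have hpre0 : ∀ n, PrefixOf (compSeq σ n (a n)) w := by
    intro n
    have hp := compSeq_prefix_tower hAE n 0
    have h1 : (fun x => σ (x + 0)) = σ := by funext x; simp
    rw [h1, Nat.add_zero, hw0] at hp
    exact hp
  refine ⟨σ, hmem, a, hpre0, ?_⟩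
  by_contra hcon
  push_neg at hcon
  obtain ⟨N, hN⟩ := hcon
  have hNlt : ∀ n, len n < N := fun n => hN n
  obtain ⟨n0, hn0⟩ := eventually_const_of_bdd (fun n => (hstep n).1) N hNlt
  have hconst : ∀ n, n0 ≤ n → σ n (a (n + 1)) = [a n] := by
    intro n hn
    apply (hstep n).2
    rw [hn0 n hn, hn0 (n + 1) (by omega)]
  have hmemlet : a n0 ∈ StabLet (fun m => σ (m + n0)) := by
    refine ⟨fun m => a (m + n0), by simp, ?_⟩
    intro m
    show σ (m + n0) (a (m + 1 + n0)) = [a (m + n0)]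
    have : m + 1 + n0 = (m + n0) + 1 := by omega
    rw [this]
    exact hconst (m + n0) (by omega)
  rw [hlet (fun m => σ (m + n0)) (fun m => hmem (m + n0))] at hmemlet
  exact hmemlet

open Filter in
lemma backward_dir [Fintype A] (S : Set (A → List A))
    (hS : ∀ f ∈ S, ∀ a, f a ≠ [])
    (w : ℕ → A) (σ : ℕ → A → List A) (hmem : ∀ n, σ n ∈ S)
    (hsa : SAdicWith σ w) : InStable S w := by
  classical
  obtain ⟨a, hpre, hlens⟩ := hsa
  set d : A := w 0 with hd
  have hne : ∀ n α, σ n α ≠ [] := fun n α => hS (σ n) (hmem n) α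
  set len : ℕ → ℕ := fun n => (compSeq σ n (a n)).length with hlen
  -- arbitrarily large lengths at arbitrarily large indices
  have hSinf : ∀ N k : ℕ, ∃ n, k ≤ n ∧ N ≤ len n := by
    intro N k
    have hT : {n | N ≤ len n}.Infinite := by
      intro hfin
      obtain ⟨M, hM⟩ := (hfin.image len).bddAbove
      obtain ⟨n, hn⟩ := hlens (max N (M + 1))
      have hnT : n ∈ {n | N ≤ len n} := le_trans (le_max_left _ _) hn
      have := hM (Set.mem_image_of_mem len hnT)
      have : len n ≤ M := this
      have : M + 1 ≤ len n := le_trans (le_max_right _ _) hn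
      omega
    obtain ⟨n, hn1, hn2⟩ := hT.exists_gt k
    exact ⟨n, hn2.le, hn1⟩
  choose φ hφ1 hφ2 using fun j => hSinf j j
  -- finite desubstituted words along the tower
  set Wl : ℕ → ℕ → List A := fun k j => compSeq (fun m => σ (m + k)) (φ j - k) (a (φ j)) with hWl
  have hW0 : ∀ j, Wl 0 j = compSeq σ (φ j) (a (φ j)) := fun j => rfl
  have hWrel : ∀ k j, k + 1 ≤ φ j → Wl k j = applyList (σ k) (Wl (k + 1) j) := by
    intro k j hk
    have h1 : φ j - k = (φ j - (k + 1)) + 1 := by omega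
    have h2 : (fun m => (fun x => σ (x + k)) (m + 1)) = (fun m => σ (m + (k + 1))) := by
      funext m
      show σ (m + 1 + k) = σ (m + (k + 1))
      rw [show m + 1 + k = m + (k + 1) by omega]
    rw [hWl]
    simp only []
    rw [h1, compSeq_succ_front, h2]
    simp only [Nat.zero_add]
  have hWne : ∀ k j, Wl k j ≠ [] :=
    fun k j => compSeq_ne_nil (fun m α => hne (m + k) α) _ _
  -- lengths of the desubstituted words are unbounded (uniformly in the level)
  have hgrow : ∀ k, ∃ C, 0 < C ∧ ∀ j, k ≤ φ j → (Wl 0 j).length ≤ C * (Wl k j).length := by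
    intro k
    induction k with
    | zero => exact ⟨1, one_pos, fun j _ => by omega⟩
    | succ k ih =>
      obtain ⟨C, hC, hCle⟩ := ih
      refine ⟨C * (Finset.univ.sup (fun b => (σ k b).length) + 1), by positivity, ?_⟩
      intro j hj
      have h1 := hCle j (by omega)
      have h2 : (Wl k j).length ≤ (Wl (k+1) j).length * (Finset.univ.sup (fun b => (σ k b).length) + 1) := by
        rw [hWrel k j hj]
        exact length_applyList_le (σ k) (Wl (k+1) j)
      calc (Wl 0 j).length ≤ C * (Wl k j).length := h1
        _ ≤ C * ((Wl (k+1) j).length * (Finset.univ.sup (fun b => (σ k b).length) + 1)) :=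
            Nat.mul_le_mul_left C h2
        _ = C * (Finset.univ.sup (fun b => (σ k b).length) + 1) * (Wl (k+1) j).length := by ring
  have hWlen0 : ∀ j, j ≤ (Wl 0 j).length := by
    intro j; rw [hW0 j]; exact hφ2 j
  have hbig : ∀ k L : ℕ, ∀ᶠ j in cofinite, L ≤ (Wl k j).length := by
    intro k L
    obtain ⟨C, hC, hCle⟩ := hgrow k
    rw [Nat.cofinite_eq_atTop, eventually_atTop]
    refine ⟨max k (C * L), fun j hj => ?_⟩
    have hk : k ≤ φ j := le_trans (le_trans (le_max_left _ _) hj) (hφ1 j)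
    have := hCle j hk
    have hj2 : C * L ≤ j := le_trans (le_max_right _ _) hj
    have := hWlen0 j
    have hCL : C * L ≤ C * (Wl k j).length := by omega
    exact Nat.le_of_mul_le_mul_left hCL hC
  -- ultrafilter limit
  set U := hyperfilter ℕ with hU
  have hcof : ∀ s : Set ℕ, (∀ᶠ j in cofinite, j ∈ s) → s ∈ U := by
    intro s hs
    exact hyperfilter_le_cofinite hs
  have key : ∀ g : ℕ → A, ∃ b : A, {j | g j = b} ∈ U := by
    intro g
    obtain ⟨b, -, hb⟩ := Ultrafilter.eq_pure_of_finite_mem (Set.finite_univ (α := A))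
      (Filter.univ_mem (f := (Ultrafilter.map g U : Filter A)))
    refine ⟨b, ?_⟩
    have : {b} ∈ Ultrafilter.map g U := by rw [hb]; exact Filter.mem_pure.mpr rfl
    rw [Ultrafilter.mem_map] at this
    exact this
  set Wpad : ℕ → ℕ → ℕ → A := fun k j i => (Wl k j).getD i d with hWpad
  set ws : ℕ → ℕ → A := fun k i => Classical.choose (key (fun j => Wpad k j i)) with hws_def
  have hws : ∀ k i, {j | Wpad k j i = ws k i} ∈ U :=
    fun k i => Classical.choose_spec (key (fun j => Wpad k j i))
  have huniq : ∀ k i b, {j | Wpad k j i = b} ∈ U → ws k i = b := by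
    intro k i b hb
    obtain ⟨j, hj1, hj2⟩ := Filter.nonempty_of_mem (Filter.inter_mem (hws k i) hb)
    exact hj1 ▸ hj2
  refine ⟨σ, ws, hmem, ?_, ?_⟩
  · -- ws 0 = w
    funext i
    apply huniq
    apply hcof
    rw [Nat.cofinite_eq_atTop, eventually_atTop]
    refine ⟨i + 1, fun j hj => ?_⟩
    have hlt : i < (Wl 0 j).length := lt_of_lt_of_le hj (hWlen0 j)
    show (Wl 0 j).getD i d = w i
    rw [List.getD_eq_getElem _ _ hlt]
    have := hpre (φ j) i (by rw [← hW0 j]; exact hlt)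
    rw [← this]
    exact (List.getElem_of_eq (hW0 j) hlt).symm
  · -- the desubstitution chain
    intro k n i hi
    apply huniq
    have hG : {j | ∀ m, m ≤ n → Wpad (k+1) j m = ws (k+1) m} ∈ U := by
      have : (⋂ m ∈ Set.Iic n, {j | Wpad (k+1) j m = ws (k+1) m}) ∈ U :=
        (Filter.biInter_mem (Set.finite_Iic n)).mpr (fun m _ => hws (k+1) m)
      apply Filter.mem_of_superset this
      intro j hj m hm
      exact Set.mem_iInter₂.mp hj m hm
    have hF : {j | n + 1 ≤ (Wl (k+1) j).length} ∈ U := hcof _ (hbig (k+1) (n+1))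
    have hH : {j | k + 1 ≤ φ j} ∈ U := by
      apply hcof
      rw [Nat.cofinite_eq_atTop, eventually_atTop]
      exact ⟨k + 1, fun j hj => le_trans hj (hφ1 j)⟩
    apply Filter.mem_of_superset (Filter.inter_mem (Filter.inter_mem hG hF) hH)
    rintro j ⟨⟨hjG, hjF⟩, hjH⟩
    have hjF' : n + 1 ≤ (Wl (k+1) j).length := hjF
    have hv : ∀ m (h : m < (Wl (k+1) j).length), m ≤ n → (Wl (k+1) j)[m] = ws (k+1) m := by
      intro m hmlt hmn
      rw [← List.getD_eq_getElem _ d hmlt]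
      exact hjG m hmn

    obtain ⟨hlt, heq⟩ := getElem_applyList_block (σ k) (ws (k+1)) (Wl (k+1) j) n
      (by omega) hv i hi
    have hWk : Wl k j = applyList (σ k) (Wl (k+1) j) := hWrel k j hjH
    show (Wl k j).getD (blockStart (σ k) (ws (k+1)) n + i) d = _
    have hlt2 : blockStart (σ k) (ws (k+1)) n + i < (Wl k j).length := by
      rw [hWk]; exact hlt
    rw [List.getD_eq_getElem _ _ hlt2, List.getElem_of_eq hWk hlt2]
    exact heq


/-- if no letter is indefinitely desubstitutable along any sequence
in `S^ω`, then the stable set of `S` is exactly the set of S-adic words. -/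
theorem stmt10 {A : Type u} [Fintype A] (S : Set (A → List A))
    (hS : ∀ f ∈ S, ∀ a, f a ≠ [])
    (hlet : ∀ σ : ℕ → A → List A, (∀ n, σ n ∈ S) → StabLet σ = ∅) :
    ∀ w : ℕ → A, InStable S w ↔ ∃ σ, (∀ n, σ n ∈ S) ∧ SAdicWith σ w := by
  intro w
  constructor
  · exact forward_dir S hS hlet w
  · rintro ⟨σ, hσ, hsa⟩
    exact backward_dir S hS w σ hσ hsa
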